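/- For every finite nonempty simple graph G: R(K4,G) + R(A4,G) = (1 + r̂(K4,G) + 3·r̂(M4,G) + 3·r̂(C4,G) + 12·r̂(Q4,G) + 12·r̂(V4,G)) / 32, where for each isomorphism type the Fourier coefficient r̂ is evaluated at any fixed labeled representative of that type (it does not depend on the choice of labeling). -/

import Mathlib

open Filter Topology SimpleGraph

namespace IndPaper

/-- The pullback of `G : SimpleGraph V` along a map `f : Fin t → V`:
distinct `i, j` are adjacent iff `f i` and `f j` are adjacent in `G`. -/
def pull {V : Type*} {t : ℕ} (G : SimpleGraph V) (f : Fin t → V) : SimpleGraph (Fin t) where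
  Adj i j := G.Adj (f i) (f j)
  symm := ⟨fun i j h => G.symm.1 _ _ h⟩
  loopless := ⟨fun i h => G.loopless.1 _ h⟩

/-- `r(H,G)`: the labeled density with repetitions of the labeled graph `H` in `G`. -/
noncomputable def labDensity {V : Type*} [Fintype V] {t : ℕ}
    (H : SimpleGraph (Fin t)) (G : SimpleGraph V) : ℝ :=
  (Nat.card {f : Fin t → V // pull G f = H} : ℝ) / (Fintype.card V : ℝ) ^ t

/-- `R(H,G)`: the density with repetitions of the isomorphism type of `H` in `G`. -/
noncomputable def repDensity {V : Type*} [Fintype V] {t : ℕ}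
    (H : SimpleGraph (Fin t)) (G : SimpleGraph V) : ℝ :=
  (Nat.card {f : Fin t → V // Nonempty (pull G f ≃g H)} : ℝ) / (Fintype.card V : ℝ) ^ t

/-- `p(H,G)`: the labeled density without repetitions (injective samples). -/
noncomputable def injDensity {V : Type*} [Fintype V] {t : ℕ}
    (H : SimpleGraph (Fin t)) (G : SimpleGraph V) : ℝ :=
  (Nat.card {f : Fin t → V // Function.Injective f ∧ pull G f = H} : ℝ) /
    ((Fintype.card V).descFactorial t : ℝ)

/-- `P(H,G)`: the number of `t`-subsets of `V(G)` inducing a copy of `H`, over `C(n,t)`. -/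
noncomputable def subsetDensity {V : Type*} [Fintype V] {t : ℕ}
    (H : SimpleGraph (Fin t)) (G : SimpleGraph V) : ℝ :=
  (Nat.card {s : Finset V // s.card = t ∧ Nonempty (G.induce (↑s : Set V) ≃g H)} : ℝ) /
    ((Fintype.card V).choose t : ℝ)

/-- `max_{|G|=n} P(H,G)`. -/
noncomputable def maxDensity {t : ℕ} (H : SimpleGraph (Fin t)) (n : ℕ) : ℝ :=
  sSup {x : ℝ | ∃ G : SimpleGraph (Fin n), x = subsetDensity H G}

/-- `min_{|G|=n} P(H,G)`. -/
noncomputable def minDensity {t : ℕ} (H : SimpleGraph (Fin t)) (n : ℕ) : ℝ :=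
  sInf {x : ℝ | ∃ G : SimpleGraph (Fin n), x = subsetDensity H G}

/-- The inducibility `I(H) = lim_n max_{|G|=n} P(H,G)` (the sequence of maxima is
eventually non-increasing, hence the limit exists and equals the `limsup`). -/
noncomputable def inducibility {t : ℕ} (H : SimpleGraph (Fin t)) : ℝ :=
  Filter.limsup (fun n => maxDensity H n) Filter.atTop

/-- The minimal inducibility `i(H) = lim_n min_{|G|=n} P(H,G)` (the sequence of minima is
eventually non-decreasing, hence the limit exists and equals the `liminf`). -/
noncomputable def minInducibility {t : ℕ} (H : SimpleGraph (Fin t)) : ℝ :=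
  Filter.liminf (fun n => minDensity H n) Filter.atTop

/-- The spectral profile: discrete Fourier transform of the labeled profile over the group
of labeled `t`-vertex graphs under symmetric difference of edge sets. -/
noncomputable def spectral {V : Type*} [Fintype V] {t : ℕ}
    (H : SimpleGraph (Fin t)) (G : SimpleGraph V) : ℝ :=
  ∑ H' : SimpleGraph (Fin t),
    (-1 : ℝ) ^ (Nat.card (H ⊓ H').edgeSet) * labDensity H' G

/-- The tensor product `G ⊗ G'`. -/
def tensor {V W : Type*} (G : SimpleGraph V) (G' : SimpleGraph W) : SimpleGraph (V × W) where
  Adj x y := Xor' (G.Adj x.1 y.1) (G'.Adj x.2 y.2)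
  symm := ⟨fun x y h => by
    rcases h with ⟨h1, h2⟩ | ⟨h1, h2⟩
    · exact Or.inl ⟨h1.symm, fun hc => h2 hc.symm⟩
    · exact Or.inr ⟨h1.symm, fun hc => h2 hc.symm⟩⟩
  loopless := ⟨fun x h => by
    rcases h with ⟨h1, _⟩ | ⟨h1, _⟩
    · exact G.loopless.1 _ h1
    · exact G'.loopless.1 _ h1⟩

/-- The composition (lexicographic product) `G ⊙ G'`. -/
def comp {V W : Type*} (G : SimpleGraph V) (G' : SimpleGraph W) : SimpleGraph (V × W) where
  Adj x y := G.Adj x.1 y.1 ∨ (x.1 = y.1 ∧ G'.Adj x.2 y.2)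
  symm := ⟨fun x y h => by
    rcases h with h | ⟨h1, h2⟩
    · exact Or.inl h.symm
    · exact Or.inr ⟨h1.symm, h2.symm⟩⟩
  loopless := ⟨fun x h => by
    rcases h with h | ⟨_, h2⟩
    · exact G.loopless.1 _ h
    · exact G'.loopless.1 _ h2⟩

/-- The blow-up of `G` of order `m`. -/
def blowUp {V : Type*} (G : SimpleGraph V) (m : ℕ) : SimpleGraph (V × Fin m) where
  Adj x y := G.Adj x.1 y.1
  symm := ⟨fun _ _ h => G.symm.1 _ _ h⟩
  loopless := ⟨fun _ h => G.loopless.1 _ h⟩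

/-- Vertex type of the `n`-fold iterated composition. -/
def iterVert (V : Type) : ℕ → Type
  | 0 => PUnit
  | n + 1 => V × iterVert V n

instance iterVertFintype (V : Type) [Fintype V] : (n : ℕ) → Fintype (iterVert V n)
  | 0 => inferInstanceAs (Fintype PUnit)
  | n + 1 => letI := iterVertFintype V n; inferInstanceAs (Fintype (V × iterVert V n))

/-- The `n`-fold iterated composition `G^{⊙n}` (`n = 0` gives a single vertex). -/
def nestedPow {V : Type} (G : SimpleGraph V) : (n : ℕ) → SimpleGraph (iterVert V n)
  | 0 => (⊥ : SimpleGraph PUnit)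
  | n + 1 => comp G (nestedPow G n)

/- Fixed labeled representatives of the 4-vertex isomorphism types. -/
def K3 : SimpleGraph (Fin 3) := ⊤
def K4 : SimpleGraph (Fin 4) := ⊤
def A4 : SimpleGraph (Fin 4) := ⊥
def P4 : SimpleGraph (Fin 4) := SimpleGraph.pathGraph 4
def C4 : SimpleGraph (Fin 4) := SimpleGraph.cycleGraph 4
def M4 : SimpleGraph (Fin 4) :=
  SimpleGraph.fromRel (fun i j => (i = 0 ∧ j = 1) ∨ (i = 2 ∧ j = 3))
def V4 : SimpleGraph (Fin 4) :=
  SimpleGraph.fromRel (fun i j => (i = 0 ∧ j = 1) ∨ (i = 0 ∧ j = 2))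
def Q4 : SimpleGraph (Fin 4) :=
  SimpleGraph.fromRel (fun i j =>
    (i = 0 ∧ j = 1) ∨ (i = 0 ∧ j = 2) ∨ (i = 1 ∧ j = 2) ∨ (i = 0 ∧ j = 3))
def T4 : SimpleGraph (Fin 4) :=
  SimpleGraph.fromRel (fun i j => (i = 0 ∧ j = 1) ∨ (i = 0 ∧ j = 2) ∨ (i = 1 ∧ j = 2))
def S4 : SimpleGraph (Fin 4) :=
  SimpleGraph.fromRel (fun i j => i = 0 ∧ (j = 1 ∨ j = 2 ∨ j = 3))
def D4 : SimpleGraph (Fin 4) :=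
  SimpleGraph.fromRel (fun i j =>
    (i = 0 ∧ j = 1) ∨ (i = 0 ∧ j = 2) ∨ (i = 0 ∧ j = 3) ∨ (i = 1 ∧ j = 2) ∨ (i = 1 ∧ j = 3))
def E4 : SimpleGraph (Fin 4) :=
  SimpleGraph.fromRel (fun i j => i = 0 ∧ j = 1)

end IndPaper



namespace IndAux
open IndPaper SimpleGraph
open scoped Classical

/-! ### Boolean/integer computational core -/

def sgnZ (b : Bool) : ℤ := cond b (-1) 1

def boolA (p q r s t u : Bool) : Fin 4 → Fin 4 → Bool :=
  fun i j => ![![false,p,q,r],![p,false,s,t],![q,s,false,u],![r,t,u,false]] i j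

def wK (a : Fin 4 → Fin 4 → Bool) (σ : Equiv.Perm (Fin 4)) : ℤ :=
  sgnZ (a (σ 0) (σ 1)) * sgnZ (a (σ 0) (σ 2)) * sgnZ (a (σ 0) (σ 3)) *
  sgnZ (a (σ 1) (σ 2)) * sgnZ (a (σ 1) (σ 3)) * sgnZ (a (σ 2) (σ 3))
def wM (a : Fin 4 → Fin 4 → Bool) (σ : Equiv.Perm (Fin 4)) : ℤ :=
  sgnZ (a (σ 0) (σ 1)) * sgnZ (a (σ 2) (σ 3))
def wC (a : Fin 4 → Fin 4 → Bool) (σ : Equiv.Perm (Fin 4)) : ℤ :=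
  sgnZ (a (σ 0) (σ 1)) * sgnZ (a (σ 1) (σ 2)) * sgnZ (a (σ 2) (σ 3)) * sgnZ (a (σ 0) (σ 3))
def wQ (a : Fin 4 → Fin 4 → Bool) (σ : Equiv.Perm (Fin 4)) : ℤ :=
  sgnZ (a (σ 0) (σ 1)) * sgnZ (a (σ 0) (σ 2)) * sgnZ (a (σ 1) (σ 2)) * sgnZ (a (σ 0) (σ 3))
def wV (a : Fin 4 → Fin 4 → Bool) (σ : Equiv.Perm (Fin 4)) : ℤ :=
  sgnZ (a (σ 0) (σ 1)) * sgnZ (a (σ 0) (σ 2))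

def tot (a : Fin 4 → Fin 4 → Bool) : ℤ :=
  ∑ σ : Equiv.Perm (Fin 4), (wK a σ + 3 * wM a σ + 3 * wC a σ + 12 * wQ a σ + 12 * wV a σ)

set_option maxHeartbeats 4000000 in
lemma coreB : ∀ p q r s t u : Bool,
    24 + tot (boolA p q r s t u) =
      if (p && q && r && s && t && u) || (!p && !q && !r && !s && !t && !u) then 768 else 0 := by
  decide

/-! ### Real-valued signs -/

noncomputable def sgR (p : Prop) : ℝ := if p then -1 else 1

noncomputable def SS (K : SimpleGraph (Fin 4)) : ℝ :=
  sgR (K.Adj 0 1) * sgR (K.Adj 0 2) * sgR (K.Adj 0 3) *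
  sgR (K.Adj 1 2) * sgR (K.Adj 1 3) * sgR (K.Adj 2 3)

lemma sgR_and_of {p : Prop} (h : p) (q : Prop) : sgR (p ∧ q) = sgR q := by
  simp [sgR, h]

lemma sgR_and_not {p : Prop} (h : ¬p) (q : Prop) : sgR (p ∧ q) = 1 := by
  simp [sgR, h]

lemma L1 (J : SimpleGraph (Fin 4)) :
    ((-1:ℝ)) ^ (Nat.card J.edgeSet) = SS J := by
  have h1 : Nat.card J.edgeSet = (Finset.univ.filter (· ∈ J.edgeSet)).card := by
    rw [Nat.card_eq_fintype_card]; exact Fintype.card_subtype _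
  rw [h1, ← Finset.prod_const, Finset.prod_filter]
  have huniv : (Finset.univ : Finset (Sym2 (Fin 4))) =
      {s(0,0), s(0,1), s(0,2), s(0,3), s(1,1), s(1,2), s(1,3), s(2,2), s(2,3), s(3,3)} := by
    decide
  rw [huniv]
  rw [Finset.prod_insert (by decide), Finset.prod_insert (by decide),
    Finset.prod_insert (by decide), Finset.prod_insert (by decide),
    Finset.prod_insert (by decide), Finset.prod_insert (by decide),
    Finset.prod_insert (by decide), Finset.prod_insert (by decide),
    Finset.prod_insert (by decide), Finset.prod_singleton]
  simp only [SimpleGraph.mem_edgeSet, SS, sgR, J.irrefl, if_false]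
  ring

/-! ### Adjacency facts for the representatives -/

lemma K401 : K4.Adj 0 1 := by simp only [K4, SimpleGraph.top_adj]; decide
lemma K402 : K4.Adj 0 2 := by simp only [K4, SimpleGraph.top_adj]; decide
lemma K403 : K4.Adj 0 3 := by simp only [K4, SimpleGraph.top_adj]; decide
lemma K412 : K4.Adj 1 2 := by simp only [K4, SimpleGraph.top_adj]; decide
lemma K413 : K4.Adj 1 3 := by simp only [K4, SimpleGraph.top_adj]; decide
lemma K423 : K4.Adj 2 3 := by simp only [K4, SimpleGraph.top_adj]; decide

lemma M401 : M4.Adj 0 1 := by simp only [M4, SimpleGraph.fromRel_adj]; decide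
lemma M402 : ¬ M4.Adj 0 2 := by simp only [M4, SimpleGraph.fromRel_adj]; decide
lemma M403 : ¬ M4.Adj 0 3 := by simp only [M4, SimpleGraph.fromRel_adj]; decide
lemma M412 : ¬ M4.Adj 1 2 := by simp only [M4, SimpleGraph.fromRel_adj]; decide
lemma M413 : ¬ M4.Adj 1 3 := by simp only [M4, SimpleGraph.fromRel_adj]; decide
lemma M423 : M4.Adj 2 3 := by simp only [M4, SimpleGraph.fromRel_adj]; decide

lemma C401 : C4.Adj 0 1 := by simp only [C4]; decide
lemma C402 : ¬ C4.Adj 0 2 := by simp only [C4]; decide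
lemma C403 : C4.Adj 0 3 := by simp only [C4]; decide
lemma C412 : C4.Adj 1 2 := by simp only [C4]; decide
lemma C413 : ¬ C4.Adj 1 3 := by simp only [C4]; decide
lemma C423 : C4.Adj 2 3 := by simp only [C4]; decide

lemma Q401 : Q4.Adj 0 1 := by simp only [Q4, SimpleGraph.fromRel_adj]; decide
lemma Q402 : Q4.Adj 0 2 := by simp only [Q4, SimpleGraph.fromRel_adj]; decide
lemma Q403 : Q4.Adj 0 3 := by simp only [Q4, SimpleGraph.fromRel_adj]; decide
lemma Q412 : Q4.Adj 1 2 := by simp only [Q4, SimpleGraph.fromRel_adj]; decide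
lemma Q413 : ¬ Q4.Adj 1 3 := by simp only [Q4, SimpleGraph.fromRel_adj]; decide
lemma Q423 : ¬ Q4.Adj 2 3 := by simp only [Q4, SimpleGraph.fromRel_adj]; decide

lemma V401 : V4.Adj 0 1 := by simp only [V4, SimpleGraph.fromRel_adj]; decide
lemma V402 : V4.Adj 0 2 := by simp only [V4, SimpleGraph.fromRel_adj]; decide
lemma V403 : ¬ V4.Adj 0 3 := by simp only [V4, SimpleGraph.fromRel_adj]; decide
lemma V412 : ¬ V4.Adj 1 2 := by simp only [V4, SimpleGraph.fromRel_adj]; decide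
lemma V413 : ¬ V4.Adj 1 3 := by simp only [V4, SimpleGraph.fromRel_adj]; decide
lemma V423 : ¬ V4.Adj 2 3 := by simp only [V4, SimpleGraph.fromRel_adj]; decide

lemma SS_inf_K4 (K : SimpleGraph (Fin 4)) : SS (K4 ⊓ K) =
    sgR (K.Adj 0 1) * sgR (K.Adj 0 2) * sgR (K.Adj 0 3) *
    sgR (K.Adj 1 2) * sgR (K.Adj 1 3) * sgR (K.Adj 2 3) := by
  unfold SS
  simp only [SimpleGraph.inf_adj]
  rw [sgR_and_of K401, sgR_and_of K402, sgR_and_of K403,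
    sgR_and_of K412, sgR_and_of K413, sgR_and_of K423]

lemma SS_inf_M4 (K : SimpleGraph (Fin 4)) : SS (M4 ⊓ K) =
    sgR (K.Adj 0 1) * sgR (K.Adj 2 3) := by
  unfold SS
  simp only [SimpleGraph.inf_adj]
  rw [sgR_and_of M401, sgR_and_not M402, sgR_and_not M403,
    sgR_and_not M412, sgR_and_not M413, sgR_and_of M423]
  ring

lemma SS_inf_C4 (K : SimpleGraph (Fin 4)) : SS (C4 ⊓ K) =
    sgR (K.Adj 0 1) * sgR (K.Adj 1 2) * sgR (K.Adj 2 3) * sgR (K.Adj 0 3) := by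
  unfold SS
  simp only [SimpleGraph.inf_adj]
  rw [sgR_and_of C401, sgR_and_not C402, sgR_and_of C403,
    sgR_and_of C412, sgR_and_not C413, sgR_and_of C423]
  ring

lemma SS_inf_Q4 (K : SimpleGraph (Fin 4)) : SS (Q4 ⊓ K) =
    sgR (K.Adj 0 1) * sgR (K.Adj 0 2) * sgR (K.Adj 1 2) * sgR (K.Adj 0 3) := by
  unfold SS
  simp only [SimpleGraph.inf_adj]
  rw [sgR_and_of Q401, sgR_and_of Q402, sgR_and_of Q403,
    sgR_and_of Q412, sgR_and_not Q413, sgR_and_not Q423]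
  ring

lemma SS_inf_V4 (K : SimpleGraph (Fin 4)) : SS (V4 ⊓ K) =
    sgR (K.Adj 0 1) * sgR (K.Adj 0 2) := by
  unfold SS
  simp only [SimpleGraph.inf_adj]
  rw [sgR_and_of V401, sgR_and_of V402, sgR_and_not V403,
    sgR_and_not V412, sgR_and_not V413, sgR_and_not V423]
  ring

end IndAux

namespace IndAux
open IndPaper SimpleGraph
open scoped Classical

lemma exb (q : Prop) : ∃ b : Bool, q ↔ b = true := by
  by_cases h : q
  · exact ⟨true, by simp [h]⟩
  · exact ⟨false, by simp [h]⟩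

lemma pointwise (H : SimpleGraph (Fin 4)) :
    (24:ℝ) + ∑ σ : Equiv.Perm (Fin 4),
      (SS (K4 ⊓ H.comap ⇑σ) + 3 * SS (M4 ⊓ H.comap ⇑σ) + 3 * SS (C4 ⊓ H.comap ⇑σ)
        + 12 * SS (Q4 ⊓ H.comap ⇑σ) + 12 * SS (V4 ⊓ H.comap ⇑σ))
      = if H = ⊤ then 768 else if H = ⊥ then 768 else 0 := by
  obtain ⟨p, hp⟩ := exb (H.Adj 0 1)
  obtain ⟨q, hq⟩ := exb (H.Adj 0 2)
  obtain ⟨r, hr⟩ := exb (H.Adj 0 3)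
  obtain ⟨s, hs⟩ := exb (H.Adj 1 2)
  obtain ⟨t, ht⟩ := exb (H.Adj 1 3)
  obtain ⟨u, hu⟩ := exb (H.Adj 2 3)
  set a : Fin 4 → Fin 4 → Bool := boolA p q r s t u with ha_def
  have ha : ∀ i j, H.Adj i j ↔ a i j = true := by
    intro i j
    fin_cases i <;> fin_cases j <;>
      simp only [ha_def, boolA, Matrix.cons_val_zero, Matrix.cons_val_one, Matrix.head_cons,
        Matrix.cons_val_two, Matrix.cons_val_three, Matrix.tail_cons, Matrix.head_fin_const,
        Fin.isValue] <;>
      first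
        | simpa using H.irrefl (v := 0)
        | simpa using H.irrefl (v := 1)
        | simpa using H.irrefl (v := 2)
        | simpa using H.irrefl (v := 3)
        | exact hp | exact hq | exact hr | exact hs | exact ht | exact hu
        | exact (H.adj_comm _ _).trans hp
        | exact (H.adj_comm _ _).trans hq
        | exact (H.adj_comm _ _).trans hr
        | exact (H.adj_comm _ _).trans hs
        | exact (H.adj_comm _ _).trans ht
        | exact (H.adj_comm _ _).trans hu
  have hsg : ∀ x y : Fin 4, sgR (H.Adj x y) = ((sgnZ (a x y) : ℤ) : ℝ) := by
    intro x y
    by_cases h : H.Adj x y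
    · rw [(ha x y).mp h]; simp [sgR, sgnZ, h]
    · have hf : a x y = false := by
        exact Bool.eq_false_iff.mpr (fun hh => h ((ha x y).mpr hh))
      rw [hf]; simp [sgR, sgnZ, h]
  have key : ∀ σ : Equiv.Perm (Fin 4),
      SS (K4 ⊓ H.comap ⇑σ) + 3 * SS (M4 ⊓ H.comap ⇑σ) + 3 * SS (C4 ⊓ H.comap ⇑σ)
        + 12 * SS (Q4 ⊓ H.comap ⇑σ) + 12 * SS (V4 ⊓ H.comap ⇑σ)
      = ((wK a σ + 3 * wM a σ + 3 * wC a σ + 12 * wQ a σ + 12 * wV a σ : ℤ) : ℝ) := by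
    intro σ
    rw [SS_inf_K4, SS_inf_M4, SS_inf_C4, SS_inf_Q4, SS_inf_V4]
    simp only [SimpleGraph.comap_adj]
    simp only [hsg]
    simp only [wK, wM, wC, wQ, wV]
    push_cast
    ring
  rw [Finset.sum_congr rfl (fun σ _ => key σ), ← Int.cast_sum]
  have h24 : (24:ℝ) + ((∑ σ : Equiv.Perm (Fin 4),
      (wK a σ + 3 * wM a σ + 3 * wC a σ + 12 * wQ a σ + 12 * wV a σ) : ℤ) : ℝ)
      = (((24 + tot a : ℤ)) : ℝ) := by
    rw [tot]; push_cast; ring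
  rw [h24, ha_def, coreB p q r s t u]
  -- relate the boolean condition to H = ⊤ / H = ⊥
  have hTiff : H = ⊤ ↔ (p && q && r && s && t && u) = true := by
    constructor
    · intro h
      subst h
      simp only [Bool.and_eq_true]
      exact ⟨⟨⟨⟨⟨hp.mp (by simp only [SimpleGraph.top_adj]; decide),
        hq.mp (by simp only [SimpleGraph.top_adj]; decide)⟩,
        hr.mp (by simp only [SimpleGraph.top_adj]; decide)⟩,
        hs.mp (by simp only [SimpleGraph.top_adj]; decide)⟩,
        ht.mp (by simp only [SimpleGraph.top_adj]; decide)⟩,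
        hu.mp (by simp only [SimpleGraph.top_adj]; decide)⟩
    · intro h
      simp only [Bool.and_eq_true] at h
      obtain ⟨⟨⟨⟨⟨hp', hq'⟩, hr'⟩, hs'⟩, ht'⟩, hu'⟩ := h
      subst hp' hq' hr' hs' ht' hu'
      ext i j
      rw [SimpleGraph.top_adj, ha i j, ha_def]
      revert i j
      decide
  have hBiff : H = ⊥ ↔ (!p && !q && !r && !s && !t && !u) = true := by
    constructor
    · intro h
      subst h
      simp only [Bool.and_eq_true, Bool.not_eq_true']
      exact ⟨⟨⟨⟨⟨Bool.eq_false_iff.mpr (fun hh => by simpa using hp.mpr hh),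
        Bool.eq_false_iff.mpr (fun hh => by simpa using hq.mpr hh)⟩,
        Bool.eq_false_iff.mpr (fun hh => by simpa using hr.mpr hh)⟩,
        Bool.eq_false_iff.mpr (fun hh => by simpa using hs.mpr hh)⟩,
        Bool.eq_false_iff.mpr (fun hh => by simpa using ht.mpr hh)⟩,
        Bool.eq_false_iff.mpr (fun hh => by simpa using hu.mpr hh)⟩
    · intro h
      simp only [Bool.and_eq_true, Bool.not_eq_true'] at h
      obtain ⟨⟨⟨⟨⟨hp', hq'⟩, hr'⟩, hs'⟩, ht'⟩, hu'⟩ := h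
      subst hp' hq' hr' hs' ht' hu'
      ext i j
      rw [SimpleGraph.bot_adj, ha i j, ha_def]
      revert i j
      decide
  by_cases hT : H = ⊤
  · rw [if_pos hT, if_pos (by simp [hTiff.mp hT])]
    norm_num
  · by_cases hB : H = ⊥
    · rw [if_neg hT, if_pos hB, if_pos (by simp [hBiff.mp hB])]
      norm_num
    · rw [if_neg hT, if_neg hB, if_neg (by
        simp only [Bool.or_eq_true]
        rintro (hh | hh)
        · exact hT (hTiff.mpr hh)
        · exact hB (hBiff.mpr hh))]
      norm_num

end IndAux

namespace IndAux
open IndPaper SimpleGraph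
open scoped Classical

variable {V : Type} [Fintype V] [Nonempty V]

lemma pull_comp (G : SimpleGraph V) (f : Fin 4 → V) (τ : Fin 4 → Fin 4) :
    pull G (f ∘ τ) = (pull G f).comap τ := rfl

def gEquiv (σ : Equiv.Perm (Fin 4)) : SimpleGraph (Fin 4) ≃ SimpleGraph (Fin 4) where
  toFun A := A.comap ⇑σ
  invFun A := A.comap ⇑σ.symm
  left_inv A := by ext u v; simp
  right_inv A := by ext u v; simp

lemma labDensity_comap (G : SimpleGraph V) (σ : Equiv.Perm (Fin 4)) (H : SimpleGraph (Fin 4)) :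
    labDensity (H.comap ⇑σ) G = labDensity H G := by
  unfold labDensity
  congr 2
  refine Nat.card_congr ?_
  exact
    { toFun := fun x => ⟨x.1 ∘ ⇑σ.symm, by
        rw [pull_comp, x.2]; ext u v; simp⟩
      invFun := fun x => ⟨x.1 ∘ ⇑σ, by rw [pull_comp, x.2]⟩
      left_inv := fun x => by apply Subtype.ext; funext i; simp
      right_inv := fun x => by apply Subtype.ext; funext i; simp }

lemma sum_labDensity (G : SimpleGraph V) :
    ∑ H : SimpleGraph (Fin 4), labDensity H G = 1 := by
  unfold labDensity
  rw [← Finset.sum_div]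
  have h1 : ∀ H : SimpleGraph (Fin 4), Nat.card {f : Fin 4 → V // pull G f = H}
      = (Finset.univ.filter (fun f : Fin 4 → V => pull G f = H)).card := by
    intro H; rw [Nat.card_eq_fintype_card]; exact Fintype.card_subtype _
  have h2 : ∑ H : SimpleGraph (Fin 4), Nat.card {f : Fin 4 → V // pull G f = H}
      = Fintype.card V ^ 4 := by
    simp only [h1]
    rw [← Finset.card_eq_sum_card_fiberwise
      (f := fun f : Fin 4 → V => pull G f) (t := Finset.univ) (fun f _ => Finset.mem_univ _)]
    rw [Finset.card_univ]
    simp [Fintype.card_fun]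
  have h3 : ∑ H : SimpleGraph (Fin 4), (Nat.card {f : Fin 4 → V // pull G f = H} : ℝ)
      = ((Fintype.card V : ℝ)) ^ 4 := by
    rw [← Nat.cast_sum, h2]; push_cast; ring
  rw [h3, div_self]
  have : 0 < Fintype.card V := Fintype.card_pos
  positivity

lemma rep_K4 (G : SimpleGraph V) : repDensity K4 G = labDensity (⊤ : SimpleGraph (Fin 4)) G := by
  unfold repDensity labDensity
  congr 2
  refine Nat.card_congr (Equiv.subtypeEquivRight fun f => ?_)
  constructor
  · rintro ⟨e⟩
    ext i j
    simp only [SimpleGraph.top_adj]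
    constructor
    · exact fun h => h.ne
    · intro hij
      have h2 : K4.Adj (e i) (e j) := by
        simp only [K4, SimpleGraph.top_adj]
        exact fun hc => hij (e.toEquiv.injective hc)
      exact e.map_rel_iff.mp h2
  · intro h
    rw [h]
    exact ⟨show (⊤ : SimpleGraph (Fin 4)) ≃g (⊤ : SimpleGraph (Fin 4)) from
      RelIso.refl _⟩

lemma rep_A4 (G : SimpleGraph V) : repDensity A4 G = labDensity (⊥ : SimpleGraph (Fin 4)) G := by
  unfold repDensity labDensity
  congr 2
  refine Nat.card_congr (Equiv.subtypeEquivRight fun f => ?_)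
  constructor
  · rintro ⟨e⟩
    ext i j
    simp only [SimpleGraph.bot_adj, iff_false]
    exact fun h => by simpa [A4] using e.map_rel_iff.mpr h
  · intro h
    rw [h]
    exact ⟨show (⊥ : SimpleGraph (Fin 4)) ≃g (⊥ : SimpleGraph (Fin 4)) from
      RelIso.refl _⟩

lemma spectral_eq (X : SimpleGraph (Fin 4)) (G : SimpleGraph V) :
    spectral X G = ∑ H : SimpleGraph (Fin 4), SS (X ⊓ H) * labDensity H G := by
  unfold spectral
  exact Finset.sum_congr rfl fun H _ => by rw [L1]

lemma sum_SS_comap (G : SimpleGraph V) (X : SimpleGraph (Fin 4)) (σ : Equiv.Perm (Fin 4)) :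
    ∑ H : SimpleGraph (Fin 4), SS (X ⊓ H.comap ⇑σ) * labDensity H G
    = ∑ H : SimpleGraph (Fin 4), SS (X ⊓ H) * labDensity H G := by
  have h1 : ∀ H : SimpleGraph (Fin 4), SS (X ⊓ H.comap ⇑σ) * labDensity H G
      = SS (X ⊓ H.comap ⇑σ) * labDensity (H.comap ⇑σ) G := fun H => by
    rw [labDensity_comap]
  rw [Finset.sum_congr rfl fun H _ => h1 H]
  exact Fintype.sum_equiv (gEquiv σ) _ _ fun H => rfl

lemma card_perm4 : Fintype.card (Equiv.Perm (Fin 4)) = 24 := by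
  rw [Fintype.card_perm, Fintype.card_fin]
  rfl

lemma top_ne_bot4 : (⊤ : SimpleGraph (Fin 4)) ≠ ⊥ := by
  intro h
  have h2 : (⊤ : SimpleGraph (Fin 4)).Adj 0 1 := (SimpleGraph.top_adj 0 1).mpr (by decide)
  rw [h] at h2
  simpa using h2

end IndAux

open IndAux in
open IndPaper in
/-- The inverse-Fourier formula for the density of monochromatic `K4`:
`R(K4,G) + R(A4,G) = (1 + r̂(K4,G) + 3r̂(M4,G) + 3r̂(C4,G) + 12r̂(Q4,G) + 12r̂(V4,G))/32`. -/
theorem repDensity_K4_add_A4_eq_spectral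
    {V : Type} [Fintype V] [Nonempty V] (G : SimpleGraph V) :
    repDensity K4 G + repDensity A4 G =
      (1 + spectral K4 G + 3 * spectral M4 G + 3 * spectral C4 G
        + 12 * spectral Q4 G + 12 * spectral V4 G) / 32 := by
  classical
  have big : ∑ H : SimpleGraph (Fin 4),
      ((24:ℝ) + ∑ σ : Equiv.Perm (Fin 4),
        (SS (K4 ⊓ H.comap ⇑σ) + 3 * SS (M4 ⊓ H.comap ⇑σ) + 3 * SS (C4 ⊓ H.comap ⇑σ)
          + 12 * SS (Q4 ⊓ H.comap ⇑σ) + 12 * SS (V4 ⊓ H.comap ⇑σ))) * labDensity H G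
      = 24 * (1 + spectral K4 G + 3 * spectral M4 G + 3 * spectral C4 G
          + 12 * spectral Q4 G + 12 * spectral V4 G) := by
    have expand : ∀ H : SimpleGraph (Fin 4),
        ((24:ℝ) + ∑ σ : Equiv.Perm (Fin 4),
          (SS (K4 ⊓ H.comap ⇑σ) + 3 * SS (M4 ⊓ H.comap ⇑σ) + 3 * SS (C4 ⊓ H.comap ⇑σ)
            + 12 * SS (Q4 ⊓ H.comap ⇑σ) + 12 * SS (V4 ⊓ H.comap ⇑σ))) * labDensity H G
        = 24 * labDensity H G + ∑ σ : Equiv.Perm (Fin 4),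
            (SS (K4 ⊓ H.comap ⇑σ) * labDensity H G
              + 3 * (SS (M4 ⊓ H.comap ⇑σ) * labDensity H G)
              + 3 * (SS (C4 ⊓ H.comap ⇑σ) * labDensity H G)
              + 12 * (SS (Q4 ⊓ H.comap ⇑σ) * labDensity H G)
              + 12 * (SS (V4 ⊓ H.comap ⇑σ) * labDensity H G)) := by
      intro H
      rw [add_mul, Finset.sum_mul]
      congr 1
      exact Finset.sum_congr rfl fun σ _ => by ring
    rw [Finset.sum_congr rfl fun H _ => expand H, Finset.sum_add_distrib,
      ← Finset.mul_sum, sum_labDensity G, Finset.sum_comm]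
    have inner : ∀ σ : Equiv.Perm (Fin 4),
        ∑ H : SimpleGraph (Fin 4),
          (SS (K4 ⊓ H.comap ⇑σ) * labDensity H G
            + 3 * (SS (M4 ⊓ H.comap ⇑σ) * labDensity H G)
            + 3 * (SS (C4 ⊓ H.comap ⇑σ) * labDensity H G)
            + 12 * (SS (Q4 ⊓ H.comap ⇑σ) * labDensity H G)
            + 12 * (SS (V4 ⊓ H.comap ⇑σ) * labDensity H G))
        = (∑ H : SimpleGraph (Fin 4), SS (K4 ⊓ H) * labDensity H G)
          + 3 * (∑ H : SimpleGraph (Fin 4), SS (M4 ⊓ H) * labDensity H G)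
          + 3 * (∑ H : SimpleGraph (Fin 4), SS (C4 ⊓ H) * labDensity H G)
          + 12 * (∑ H : SimpleGraph (Fin 4), SS (Q4 ⊓ H) * labDensity H G)
          + 12 * (∑ H : SimpleGraph (Fin 4), SS (V4 ⊓ H) * labDensity H G) := by
      intro σ
      rw [Finset.sum_add_distrib, Finset.sum_add_distrib, Finset.sum_add_distrib,
        Finset.sum_add_distrib, ← Finset.mul_sum, ← Finset.mul_sum, ← Finset.mul_sum,
        ← Finset.mul_sum, sum_SS_comap G K4 σ, sum_SS_comap G M4 σ, sum_SS_comap G C4 σ,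
        sum_SS_comap G Q4 σ, sum_SS_comap G V4 σ]
    rw [Finset.sum_congr rfl fun σ _ => inner σ, Finset.sum_const, Finset.card_univ,
      card_perm4, ← spectral_eq K4 G, ← spectral_eq M4 G, ← spectral_eq C4 G,
      ← spectral_eq Q4 G, ← spectral_eq V4 G, nsmul_eq_mul]
    push_cast
    ring
  have ite_sum : ∑ H : SimpleGraph (Fin 4),
      ((24:ℝ) + ∑ σ : Equiv.Perm (Fin 4),
        (SS (K4 ⊓ H.comap ⇑σ) + 3 * SS (M4 ⊓ H.comap ⇑σ) + 3 * SS (C4 ⊓ H.comap ⇑σ)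
          + 12 * SS (Q4 ⊓ H.comap ⇑σ) + 12 * SS (V4 ⊓ H.comap ⇑σ))) * labDensity H G
      = 768 * (labDensity (⊤ : SimpleGraph (Fin 4)) G + labDensity (⊥ : SimpleGraph (Fin 4)) G) := by
    rw [Finset.sum_congr rfl fun H _ => by rw [pointwise H]]
    have hsplit : ∀ H : SimpleGraph (Fin 4),
        (if H = ⊤ then (768:ℝ) else if H = ⊥ then 768 else 0) * labDensity H G
        = (if H = ⊤ then 768 * labDensity (⊤ : SimpleGraph (Fin 4)) G else 0)
          + (if H = ⊥ then 768 * labDensity (⊥ : SimpleGraph (Fin 4)) G else 0) := by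
      intro H
      by_cases h1 : H = ⊤
      · have h2 : ¬ H = ⊥ := by rw [h1]; exact top_ne_bot4
        rw [if_pos h1, if_pos h1, if_neg h2, h1]
        ring
      · by_cases h2 : H = ⊥
        · rw [if_neg h1, if_neg h1, if_pos h2, if_pos h2, h2]
          ring
        · rw [if_neg h1, if_neg h1, if_neg h2, if_neg h2]
          ring
    rw [Finset.sum_congr rfl fun H _ => hsplit H, Finset.sum_add_distrib,
      Finset.sum_ite_eq' Finset.univ (⊤ : SimpleGraph (Fin 4))
        (fun _ => 768 * labDensity (⊤ : SimpleGraph (Fin 4)) G),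
      Finset.sum_ite_eq' Finset.univ (⊥ : SimpleGraph (Fin 4))
        (fun _ => 768 * labDensity (⊥ : SimpleGraph (Fin 4)) G),
      if_pos (Finset.mem_univ _), if_pos (Finset.mem_univ _)]
    ring
  have key := big.symm.trans ite_sum
  rw [rep_K4, rep_A4]
  linarith [key]
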